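/- Exponential decay of the sensitivity kernels (Lemma 6.4): Let γ, Υ, Ῡ > 0, Υ_E ≥ 1 and ρ ∈ (0,1). Assume the data bounds ‖A_k‖, ‖B_k‖, ‖R_k‖, ‖S_k‖, ‖D_{k1}‖, ‖D_{k2}‖ ≤ Υ for all k; assume the Riccati quantities satisfy W_k ⪰ γI for all k ∈ {0,…,N−1}, ‖K_k‖ ≤ Ῡ for all k ∈ {0,…,N}, and ‖E_jE_{j−1}⋯E_i‖ ≤ Υ_E ρ^{j−i+1} for all 0 ≤ i ≤ j ≤ N−1. Define O_k = B_kW_k⁻¹B_kᵀ and, for i ∈ {0,…,N−1}, k ∈ {0,…,N}, U_i^k = Σ_{s=0}^{min(i,k)−1}(E_{k−1}⋯E_{s+1})O_s(M_i^{s+1})ᵀ − [i+1 ≤ k]·(E_{k−1}⋯E_{i+1})B_iW_i⁻¹D_{i2}ᵀ and F_i^k = Σ_{s=0}^{min(i,k)−1}(E_{k−1}⋯E_{s+1})O_s(V_i^{s+1})ᵀ + [i+1 ≤ k]·(E_{k−1}⋯E_{i+1})(I − O_iK_{i+1}), with [·] the indicator and empty products of the E's the identity. Then there exists a constant Υ_{uf}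 > 0, depending only on (γ, Υ, Ῡ, Υ_E, ρ) and not on N, i, or k, such that ‖U_i^k‖ ≤ Υ_{uf} ρ^{|i−k|} and ‖F_i^k‖ ≤ Υ_{uf} ρ^{|i−k|} for all i ∈ {0,…,N−1} and k ∈ {0,…,N}. -/

import Mathlib

open Matrix BigOperators Finset

/-- The spectral (operator) norm of a real matrix. -/
noncomputable def opNorm {m n : Type*} [Fintype m] [Fintype n] [DecidableEq n]
    (A : Matrix m n ℝ) : ℝ :=
  ‖LinearMap.toContinuousLinearMap (Matrix.toEuclideanLin A)‖

/-- Ordered product of matrices: `prodE E i len = E (i+len-1) * ⋯ * E (i+1) * E i`. -/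
def prodE {n : ℕ} (E : ℕ → Matrix (Fin n) (Fin n) ℝ) : ℕ → ℕ → Matrix (Fin n) (Fin n) ℝ
  | _, 0 => 1
  | i, (len + 1) => E (i + len) * prodE E i len

/-- `V_i^k = -K_{i+1} (E_i E_{i-1} ⋯ E_k)`. -/
noncomputable def Vmat {nx : ℕ} (K E : ℕ → Matrix (Fin nx) (Fin nx) ℝ) (i k : ℕ) :
    Matrix (Fin nx) (Fin nx) ℝ :=
  -(K (i + 1) * prodE E k (i + 1 - k))

/-- `M_i^k = -(D_{i1} + D_{i2} P_i) (E_{i-1} E_{i-2} ⋯ E_k)`. -/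
noncomputable def Mmat {nx nu nd : ℕ} (D1 : ℕ → Matrix (Fin nd) (Fin nx) ℝ)
    (D2 : ℕ → Matrix (Fin nd) (Fin nu) ℝ) (P : ℕ → Matrix (Fin nu) (Fin nx) ℝ)
    (E : ℕ → Matrix (Fin nx) (Fin nx) ℝ) (i k : ℕ) : Matrix (Fin nd) (Fin nx) ℝ :=
  -((D1 i + D2 i * P i) * prodE E k (i - k))

/-- `O_k = B_k W_k⁻¹ B_kᵀ`. -/
noncomputable def Okm {nx nu : ℕ} (B : ℕ → Matrix (Fin nx) (Fin nu) ℝ)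
    (W : ℕ → Matrix (Fin nu) (Fin nu) ℝ) (k : ℕ) : Matrix (Fin nx) (Fin nx) ℝ :=
  B k * (W k)⁻¹ * (B k)ᵀ

/-- The sensitivity kernel `U_i^k`. -/
noncomputable def Umat {nx nu nd : ℕ} (B : ℕ → Matrix (Fin nx) (Fin nu) ℝ)
    (W : ℕ → Matrix (Fin nu) (Fin nu) ℝ) (P : ℕ → Matrix (Fin nu) (Fin nx) ℝ)
    (E : ℕ → Matrix (Fin nx) (Fin nx) ℝ)
    (D1 : ℕ → Matrix (Fin nd) (Fin nx) ℝ) (D2 : ℕ → Matrix (Fin nd) (Fin nu) ℝ)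
    (i k : ℕ) : Matrix (Fin nx) (Fin nd) ℝ :=
  (∑ s ∈ range (min i k),
      prodE E (s + 1) (k - 1 - s) * Okm B W s * (Mmat D1 D2 P E i (s + 1))ᵀ)
    - (if i + 1 ≤ k then prodE E (i + 1) (k - 1 - i) * B i * (W i)⁻¹ * (D2 i)ᵀ else 0)

/-- The sensitivity kernel `F_i^k`. -/
noncomputable def Fmat {nx nu : ℕ} (B : ℕ → Matrix (Fin nx) (Fin nu) ℝ)
    (W : ℕ → Matrix (Fin nu) (Fin nu) ℝ)
    (K E : ℕ → Matrix (Fin nx) (Fin nx) ℝ) (i k : ℕ) : Matrix (Fin nx) (Fin nx) ℝ :=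
  (∑ s ∈ range (min i k),
      prodE E (s + 1) (k - 1 - s) * Okm B W s * (Vmat K E i (s + 1))ᵀ)
    + (if i + 1 ≤ k then prodE E (i + 1) (k - 1 - i) * (1 - Okm B W i * K (i + 1)) else 0)

section helpers
open scoped Matrix.Norms.L2Operator
set_option linter.unusedSectionVars false
variable {m n l : Type*} [Fintype m] [Fintype n] [Fintype l] [DecidableEq m] [DecidableEq n] [DecidableEq l]

lemma opNorm_eq_norm (A : Matrix m n ℝ) : opNorm A = ‖A‖ := rfl

lemma opNorm_nonneg (A : Matrix m n ℝ) : 0 ≤ opNorm A := by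
  rw [opNorm_eq_norm]; exact norm_nonneg _

lemma opNorm_mul_le (A : Matrix m n ℝ) (B : Matrix n l ℝ) :
    opNorm (A * B) ≤ opNorm A * opNorm B := by
  simpa only [opNorm_eq_norm] using Matrix.l2_opNorm_mul A B

lemma opNorm_mul_le' {A : Matrix m n ℝ} {B : Matrix n l ℝ} {a b : ℝ}
    (h1 : opNorm A ≤ a) (h2 : opNorm B ≤ b) : opNorm (A * B) ≤ a * b :=
  (opNorm_mul_le A B).trans
    (mul_le_mul h1 h2 (opNorm_nonneg B) ((opNorm_nonneg A).trans h1))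

lemma opNorm_neg (A : Matrix m n ℝ) : opNorm (-A) = opNorm A := by
  rw [opNorm_eq_norm, opNorm_eq_norm]; exact norm_neg _

lemma opNorm_transpose (A : Matrix m n ℝ) : opNorm Aᵀ = opNorm A := by
  rw [opNorm_eq_norm, opNorm_eq_norm, ← Matrix.l2_opNorm_conjTranspose A]
  congr 1

lemma opNorm_add_le (A B : Matrix m n ℝ) : opNorm (A + B) ≤ opNorm A + opNorm B := by
  simp only [opNorm_eq_norm]; exact norm_add_le _ _

lemma opNorm_sub_le (A B : Matrix m n ℝ) : opNorm (A - B) ≤ opNorm A + opNorm B := by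
  simp only [opNorm_eq_norm]; exact norm_sub_le _ _

lemma opNorm_zero : opNorm (0 : Matrix m n ℝ) = 0 := by
  rw [opNorm_eq_norm]; exact norm_zero

lemma opNorm_sum_le {ι : Type*} (s : Finset ι) (f : ι → Matrix m n ℝ) :
    opNorm (∑ i ∈ s, f i) ≤ ∑ i ∈ s, opNorm (f i) := by
  simp only [opNorm_eq_norm]; exact norm_sum_le _ _

lemma opNorm_one_le : opNorm (1 : Matrix n n ℝ) ≤ 1 := by
  rw [opNorm_eq_norm, Matrix.l2_opNorm_def]
  refine ContinuousLinearMap.opNorm_le_bound _ zero_le_one fun x => ?_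
  rw [LinearEquiv.trans_apply, LinearMap.coe_toContinuousLinearMap']
  rw [Matrix.toEuclideanLin_apply, Matrix.one_mulVec, one_mul]

end helpers

section helpers2
open scoped Matrix.Norms.L2Operator

lemma geom_sum_le_inv {q : ℝ} (h0 : 0 ≤ q) (h1 : q < 1) (m : ℕ) :
    ∑ t ∈ Finset.range m, q ^ t ≤ (1 - q)⁻¹ := by
  have hs := Summable.sum_le_tsum (Finset.range m) (fun t _ => pow_nonneg h0 t)
    (summable_geometric_of_lt_one h0 h1)
  rwa [tsum_geometric_of_lt_one h0 h1] at hs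

lemma opNorm_inv_le {n : Type*} [Fintype n] [DecidableEq n] {W : Matrix n n ℝ} {γ : ℝ}
    (hγ : 0 < γ) (h : (W - γ • (1 : Matrix n n ℝ)).PosSemidef) : opNorm W⁻¹ ≤ γ⁻¹ := by
  have hsm : (γ • (1 : Matrix n n ℝ)).PosDef := by
    refine Matrix.PosDef.of_dotProduct_mulVec_pos ?_ fun x hx => ?_
    · simp [Matrix.IsHermitian, Matrix.conjTranspose_smul]
    · have e : dotProduct (star x) ((γ • (1 : Matrix n n ℝ)) *ᵥ x)
          = γ * dotProduct (star x) x := by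
        rw [Matrix.smul_mulVec, Matrix.one_mulVec, dotProduct_smul,
          smul_eq_mul]
      rw [e]
      exact mul_pos hγ (dotProduct_star_self_pos_iff.mpr hx)
  have hW : W.PosDef := by
    have e : W = (W - γ • 1) + γ • 1 := by abel
    rw [e]
    exact Matrix.PosDef.posSemidef_add h hsm
  have hdet : IsUnit W.det := hW.det_pos.ne'.isUnit
  have hWinv : W * W⁻¹ = 1 := Matrix.mul_nonsing_inv W hdet
  have key : ∀ z : EuclideanSpace ℝ n, γ * ‖z‖ ≤ ‖Matrix.toEuclideanLin W z‖ := by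
    intro z
    rcases eq_or_ne z 0 with rfl | hz
    · simp
    · have hzpos : (0:ℝ) < ‖z‖ := norm_pos_iff.mpr hz
      have hps := h.dotProduct_mulVec_nonneg ((WithLp.equiv 2 (n → ℝ)) z)
      rw [Matrix.sub_mulVec, dotProduct_sub] at hps
      have e3 : dotProduct (star ((WithLp.equiv 2 (n → ℝ)) z))
            ((γ • (1 : Matrix n n ℝ)) *ᵥ ((WithLp.equiv 2 (n → ℝ)) z))
          = γ * dotProduct (star ((WithLp.equiv 2 (n → ℝ)) z)) ((WithLp.equiv 2 (n → ℝ)) z) := by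
        rw [Matrix.smul_mulVec, Matrix.one_mulVec, dotProduct_smul, smul_eq_mul]
      rw [e3] at hps
      have e1 : (inner ℝ z (Matrix.toEuclideanLin W z) : ℝ)
          = dotProduct (star ((WithLp.equiv 2 (n → ℝ)) z)) (W *ᵥ ((WithLp.equiv 2 (n → ℝ)) z)) := by
        rw [EuclideanSpace.inner_eq_star_dotProduct, dotProduct_comm]; rfl
      have e2 : (‖z‖^2 : ℝ)
          = dotProduct (star ((WithLp.equiv 2 (n → ℝ)) z)) ((WithLp.equiv 2 (n → ℝ)) z) := by
        rw [← real_inner_self_eq_norm_sq]; rfl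
      have h2 : (inner ℝ z (Matrix.toEuclideanLin W z) : ℝ)
          ≤ ‖z‖ * ‖Matrix.toEuclideanLin W z‖ := real_inner_le_norm _ _
      have h1 : γ * ‖z‖^2 ≤ ‖z‖ * ‖Matrix.toEuclideanLin W z‖ := by
        rw [e2]; linarith [e1 ▸ h2]
      nlinarith [h1, hzpos]
  rw [opNorm_eq_norm, Matrix.l2_opNorm_def]
  refine ContinuousLinearMap.opNorm_le_bound _ (inv_nonneg.mpr hγ.le) fun x => ?_
  rw [LinearEquiv.trans_apply, LinearMap.coe_toContinuousLinearMap']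
  have hx : Matrix.toEuclideanLin W (Matrix.toEuclideanLin W⁻¹ x) = x := by
    rw [Matrix.toEuclideanLin_apply, Matrix.toEuclideanLin_apply]
    rw [WithLp.ofLp_toLp, Matrix.mulVec_mulVec, hWinv, Matrix.one_mulVec]
  have h9 := key (Matrix.toEuclideanLin W⁻¹ x)
  rw [hx] at h9
  calc ‖Matrix.toEuclideanLin W⁻¹ x‖ = γ⁻¹ * (γ * ‖Matrix.toEuclideanLin W⁻¹ x‖) := by
        field_simp
    _ ≤ γ⁻¹ * ‖x‖ := mul_le_mul_of_nonneg_left h9 (inv_nonneg.mpr hγ.le)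

end helpers2

set_option maxHeartbeats 2000000 in
/-- **Exponential decay of the sensitivity kernels (Lemma 6.4).**  Under the stated
bounds on the data, the Riccati quantities, and the closed-loop products, there is a
constant `Υ_{uf}` depending only on `(γ, Υ, Ῡ, Υ_E, ρ)` such that
`‖U_i^k‖, ‖F_i^k‖ ≤ Υ_{uf} ρ^{|i−k|}`. -/
theorem sensitivity_kernel_decay
    (γ Υ Ybar ΥE ρ : ℝ)
    (hγ : 0 < γ) (hΥ : 0 < Υ) (hYbar : 0 < Ybar) (hΥE : 1 ≤ ΥE)
    (hρ0 : 0 < ρ) (hρ1 : ρ < 1) :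
    ∃ Υuf : ℝ, 0 < Υuf ∧
      ∀ (N nx nu nd : ℕ), 1 ≤ N → 1 ≤ nx → 1 ≤ nu → 1 ≤ nd →
      ∀ (A : ℕ → Matrix (Fin nx) (Fin nx) ℝ) (B : ℕ → Matrix (Fin nx) (Fin nu) ℝ)
        (Q : ℕ → Matrix (Fin nx) (Fin nx) ℝ) (R : ℕ → Matrix (Fin nu) (Fin nu) ℝ)
        (S : ℕ → Matrix (Fin nu) (Fin nx) ℝ)
        (D1 : ℕ → Matrix (Fin nd) (Fin nx) ℝ) (D2 : ℕ → Matrix (Fin nd) (Fin nu) ℝ),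
      (∀ k ≤ N, (Q k).IsSymm) → (∀ k < N, (R k).IsSymm) →
      ∀ (K : ℕ → Matrix (Fin nx) (Fin nx) ℝ) (W : ℕ → Matrix (Fin nu) (Fin nu) ℝ)
        (P : ℕ → Matrix (Fin nu) (Fin nx) ℝ) (E : ℕ → Matrix (Fin nx) (Fin nx) ℝ),
      K N = Q N →
      (∀ k < N, W k = R k + (B k)ᵀ * K (k + 1) * B k) →
      (∀ k < N, P k = -((W k)⁻¹ * ((B k)ᵀ * K (k + 1) * A k + S k))) →
      (∀ k < N, K k =
        Q k + (A k)ᵀ * K (k + 1) * A k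
          - ((B k)ᵀ * K (k + 1) * A k + S k)ᵀ * (W k)⁻¹
              * ((B k)ᵀ * K (k + 1) * A k + S k)) →
      (∀ k < N, E k = A k + B k * P k) →
      (∀ k < N, opNorm (A k) ≤ Υ ∧ opNorm (B k) ≤ Υ ∧ opNorm (R k) ≤ Υ ∧
        opNorm (S k) ≤ Υ ∧ opNorm (D1 k) ≤ Υ ∧ opNorm (D2 k) ≤ Υ) →
      (∀ k < N, (W k - γ • (1 : Matrix (Fin nu) (Fin nu) ℝ)).PosSemidef) →
      (∀ k ≤ N, opNorm (K k) ≤ Ybar) →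
      (∀ i j, i ≤ j → j < N → opNorm (prodE E i (j - i + 1)) ≤ ΥE * ρ ^ (j - i + 1)) →
      ∀ i < N, ∀ k ≤ N,
        opNorm (Umat B W P E D1 D2 i k) ≤ Υuf * ρ ^ (Nat.dist i k) ∧
        opNorm (Fmat B W K E i k) ≤ Υuf * ρ ^ (Nat.dist i k) := by
  have hΥE0 : (0:ℝ) < ΥE := lt_of_lt_of_le one_pos hΥE
  have hq0 : (0:ℝ) ≤ ρ ^ 2 := sq_nonneg ρ
  have hq1 : ρ ^ 2 < 1 := by nlinarith
  have hden : (0:ℝ) < 1 - ρ ^ 2 := by linarith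
  set Pb : ℝ := γ⁻¹ * (Υ * Ybar * Υ + Υ) with hPbdef
  set CO : ℝ := Υ * γ⁻¹ * Υ with hCOdef
  set Cc : ℝ := (Υ + Υ * Pb + Ybar) * ΥE with hCcdef
  set cind : ℝ := Υ * γ⁻¹ * Υ + (1 + CO * Ybar) with hcinddef
  have hPb0 : 0 ≤ Pb := by rw [hPbdef]; positivity
  have hCO0 : 0 ≤ CO := by rw [hCOdef]; positivity
  have hCc0 : 0 ≤ Cc := by rw [hCcdef, hPbdef]; positivity
  have hcind0 : 0 ≤ cind := by rw [hcinddef, hCOdef]; positivity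
  have hsumc0 : 0 ≤ ΥE * CO * Cc * (1 - ρ ^ 2)⁻¹ :=
    mul_nonneg (mul_nonneg (mul_nonneg hΥE0.le hCO0) hCc0) (inv_nonneg.mpr hden.le)
  have hindc0 : 0 ≤ ΥE * cind * ρ⁻¹ :=
    mul_nonneg (mul_nonneg hΥE0.le hcind0) (inv_nonneg.mpr hρ0.le)
  refine ⟨ΥE * CO * Cc * (1 - ρ ^ 2)⁻¹ + ΥE * cind * ρ⁻¹ + 1, by linarith, ?_⟩
  intro N nx nu nd hN hnx hnu hnd A B Q R S D1 D2 hQs hRs K W P E hKN hWdef hPdef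
    hKdef hEdef hdata hWpsd hKb hEb i hi k hk
  -- product bounds
  have hprod : ∀ a len : ℕ, a + len ≤ N → opNorm (prodE E a len) ≤ ΥE * ρ ^ len := by
    intro a len hlen
    cases len with
    | zero =>
        simp only [prodE, pow_zero, mul_one]
        exact le_trans opNorm_one_le hΥE
    | succ l =>
        have h2 := hEb a (a + l) (Nat.le_add_right _ _) (by omega)
        have e : a + l - a + 1 = l + 1 := by omega
        rwa [e] at h2
  have hWinv : ∀ s, s < N → opNorm (W s)⁻¹ ≤ γ⁻¹ := fun s hs => opNorm_inv_le hγ (hWpsd s hs)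
  have hOb : ∀ s, s < N → opNorm (Okm B W s) ≤ CO := by
    intro s hs
    have hB := (hdata s hs).2.1
    have h1 : opNorm ((B s)ᵀ) ≤ Υ := by rw [opNorm_transpose]; exact hB
    have h2 := opNorm_mul_le' (opNorm_mul_le' hB (hWinv s hs)) h1
    rw [hCOdef]
    simpa only [Okm] using h2
  have hPbd : ∀ s, s < N → opNorm (P s) ≤ Pb := by
    intro s hs
    rw [hPdef s hs, opNorm_neg, hPbdef]
    refine opNorm_mul_le' (hWinv s hs) ?_
    refine le_trans (opNorm_add_le _ _) (add_le_add ?_ (hdata s hs).2.2.2.1)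
    refine opNorm_mul_le' (opNorm_mul_le' ?_ (hKb (s + 1) (by omega))) (hdata s hs).1
    rw [opNorm_transpose]; exact (hdata s hs).2.1
  have hGM : ∀ s, s < min i k → opNorm ((Mmat D1 D2 P E i (s + 1))ᵀ) ≤ Cc * ρ ^ (i - 1 - s) := by
    intro s hs
    have hsi : s < i := lt_of_lt_of_le hs (min_le_left _ _)
    rw [opNorm_transpose]
    simp only [Mmat]
    rw [opNorm_neg]
    have h1 : opNorm (D1 i + D2 i * P i) ≤ Υ + Υ * Pb :=
      le_trans (opNorm_add_le _ _) (add_le_add (hdata i hi).2.2.2.2.1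
        (opNorm_mul_le' (hdata i hi).2.2.2.2.2 (hPbd i hi)))
    have h2 : opNorm (prodE E (s + 1) (i - (s + 1))) ≤ ΥE * ρ ^ (i - (s + 1)) :=
      hprod _ _ (by omega)
    have h3 := opNorm_mul_le' h1 h2
    refine le_trans h3 ?_
    have e : i - (s + 1) = i - 1 - s := by omega
    rw [e]
    have hr : (0:ℝ) ≤ ρ ^ (i - 1 - s) := pow_nonneg hρ0.le _
    calc (Υ + Υ * Pb) * (ΥE * ρ ^ (i - 1 - s))
        = ((Υ + Υ * Pb) * ΥE) * ρ ^ (i - 1 - s) := by ring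
      _ ≤ Cc * ρ ^ (i - 1 - s) := by
          refine mul_le_mul_of_nonneg_right ?_ hr
          rw [hCcdef]
          refine mul_le_mul_of_nonneg_right ?_ hΥE0.le
          linarith
  have hGV : ∀ s, s < min i k → opNorm ((Vmat K E i (s + 1))ᵀ) ≤ Cc * ρ ^ (i - 1 - s) := by
    intro s hs
    have hsi : s < i := lt_of_lt_of_le hs (min_le_left _ _)
    rw [opNorm_transpose]
    simp only [Vmat]
    rw [opNorm_neg]
    have h2 : opNorm (prodE E (s + 1) (i + 1 - (s + 1))) ≤ ΥE * ρ ^ (i + 1 - (s + 1)) :=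
      hprod _ _ (by omega)
    have h3 := opNorm_mul_le' (hKb (i + 1) (by omega)) h2
    refine le_trans h3 ?_
    have hpow : ρ ^ (i + 1 - (s + 1)) ≤ ρ ^ (i - 1 - s) :=
      pow_le_pow_of_le_one hρ0.le hρ1.le (by omega)
    have hr : (0:ℝ) ≤ ρ ^ (i - 1 - s) := pow_nonneg hρ0.le _
    calc Ybar * (ΥE * ρ ^ (i + 1 - (s + 1)))
        ≤ Ybar * (ΥE * ρ ^ (i - 1 - s)) :=
          mul_le_mul_of_nonneg_left (mul_le_mul_of_nonneg_left hpow hΥE0.le) hYbar.le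
      _ = (Ybar * ΥE) * ρ ^ (i - 1 - s) := by ring
      _ ≤ Cc * ρ ^ (i - 1 - s) := by
          refine mul_le_mul_of_nonneg_right ?_ hr
          rw [hCcdef]
          nlinarith [mul_nonneg (add_nonneg hΥ.le (mul_nonneg hΥ.le hPb0)) hΥE0.le]
  -- generic sum bound
  have hsum : ∀ (nz : ℕ) (G : ℕ → Matrix (Fin nx) (Fin nz) ℝ),
      (∀ s, s < min i k → opNorm (G s) ≤ Cc * ρ ^ (i - 1 - s)) →
      opNorm (∑ s ∈ range (min i k), prodE E (s + 1) (k - 1 - s) * Okm B W s * G s)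
        ≤ ΥE * CO * Cc * (1 - ρ ^ 2)⁻¹ * ρ ^ (Nat.dist i k) := by
    intro nz G hG
    have hcoef0 : 0 ≤ ΥE * CO * Cc * ρ ^ Nat.dist i k :=
      mul_nonneg (mul_nonneg (mul_nonneg hΥE0.le hCO0) hCc0) (pow_nonneg hρ0.le _)
    calc opNorm (∑ s ∈ range (min i k), prodE E (s + 1) (k - 1 - s) * Okm B W s * G s)
        ≤ ∑ s ∈ range (min i k),
            opNorm (prodE E (s + 1) (k - 1 - s) * Okm B W s * G s) := opNorm_sum_le _ _
      _ ≤ ∑ s ∈ range (min i k),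
            (ΥE * CO * Cc * ρ ^ Nat.dist i k) * (ρ ^ 2) ^ (min i k - 1 - s) := by
          refine Finset.sum_le_sum fun s hs => ?_
          rw [Finset.mem_range] at hs
          have hsk : s < k := lt_of_lt_of_le hs (min_le_right _ _)
          have hsi : s < i := lt_of_lt_of_le hs (min_le_left _ _)
          have t1 : opNorm (prodE E (s + 1) (k - 1 - s)) ≤ ΥE * ρ ^ (k - 1 - s) :=
            hprod _ _ (by omega)
          have t := opNorm_mul_le' (opNorm_mul_le' t1 (hOb s (by omega))) (hG s hs)
          refine le_trans t (le_of_eq ?_)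
          have hexp : (k - 1 - s) + (i - 1 - s) = Nat.dist i k + 2 * (min i k - 1 - s) := by
            simp only [Nat.dist]; omega
          rw [show ΥE * ρ ^ (k - 1 - s) * CO * (Cc * ρ ^ (i - 1 - s))
              = (ΥE * CO * Cc) * ρ ^ ((k - 1 - s) + (i - 1 - s)) by rw [pow_add]; ring,
            hexp, pow_add, pow_mul]
          ring
      _ = (ΥE * CO * Cc * ρ ^ Nat.dist i k) *
            ∑ s ∈ range (min i k), (ρ ^ 2) ^ (min i k - 1 - s) := by
          rw [Finset.mul_sum]
      _ = (ΥE * CO * Cc * ρ ^ Nat.dist i k) * ∑ t ∈ range (min i k), (ρ ^ 2) ^ t := by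
          rw [Finset.sum_range_reflect]
      _ ≤ (ΥE * CO * Cc * ρ ^ Nat.dist i k) * (1 - ρ ^ 2)⁻¹ :=
          mul_le_mul_of_nonneg_left (geom_sum_le_inv hq0 hq1 _) hcoef0
      _ = ΥE * CO * Cc * (1 - ρ ^ 2)⁻¹ * ρ ^ Nat.dist i k := by ring
  -- indicator bounds
  have hrhodist0 : (0:ℝ) ≤ ρ ^ Nat.dist i k := pow_nonneg hρ0.le _
  have hind0 : (0:ℝ) ≤ ΥE * cind * ρ⁻¹ * ρ ^ Nat.dist i k := mul_nonneg hindc0 hrhodist0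
  have hindkey : ∀ hik : i + 1 ≤ k,
      ΥE * cind * ρ⁻¹ * ρ ^ Nat.dist i k = ΥE * cind * ρ ^ (k - 1 - i) := by
    intro hik
    have hd : Nat.dist i k = k - i := Nat.dist_eq_sub_of_le (by omega)
    have he : ρ ^ (k - 1 - i) * ρ = ρ ^ (k - i) := by
      rw [← pow_succ]; congr 1; omega
    rw [hd, ← he]
    field_simp
  have hindU : opNorm (if i + 1 ≤ k then
        prodE E (i + 1) (k - 1 - i) * B i * (W i)⁻¹ * (D2 i)ᵀ else 0)
      ≤ ΥE * cind * ρ⁻¹ * ρ ^ Nat.dist i k := by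
    by_cases hik : i + 1 ≤ k
    · rw [if_pos hik, hindkey hik]
      have t1 : opNorm (prodE E (i + 1) (k - 1 - i)) ≤ ΥE * ρ ^ (k - 1 - i) :=
        hprod _ _ (by omega)
      have hD2T : opNorm ((D2 i)ᵀ) ≤ Υ := by
        rw [opNorm_transpose]; exact (hdata i hi).2.2.2.2.2
      have t := opNorm_mul_le' (opNorm_mul_le'
        (opNorm_mul_le' t1 (hdata i hi).2.1) (hWinv i hi)) hD2T
      refine le_trans t ?_
      have h5 : Υ * γ⁻¹ * Υ ≤ cind := by
        rw [hcinddef]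
        nlinarith [mul_nonneg hCO0 hYbar.le]
      have hr : (0:ℝ) ≤ ΥE * ρ ^ (k - 1 - i) :=
        mul_nonneg hΥE0.le (pow_nonneg hρ0.le _)
      calc ΥE * ρ ^ (k - 1 - i) * Υ * γ⁻¹ * Υ
          = (Υ * γ⁻¹ * Υ) * (ΥE * ρ ^ (k - 1 - i)) := by ring
        _ ≤ cind * (ΥE * ρ ^ (k - 1 - i)) := mul_le_mul_of_nonneg_right h5 hr
        _ = ΥE * cind * ρ ^ (k - 1 - i) := by ring
    · rw [if_neg hik, opNorm_zero]
      exact hind0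
  have hindF : opNorm (if i + 1 ≤ k then
        prodE E (i + 1) (k - 1 - i) * (1 - Okm B W i * K (i + 1)) else 0)
      ≤ ΥE * cind * ρ⁻¹ * ρ ^ Nat.dist i k := by
    by_cases hik : i + 1 ≤ k
    · rw [if_pos hik, hindkey hik]
      have t1 : opNorm (prodE E (i + 1) (k - 1 - i)) ≤ ΥE * ρ ^ (k - 1 - i) :=
        hprod _ _ (by omega)
      have hX : opNorm (1 - Okm B W i * K (i + 1)) ≤ 1 + CO * Ybar :=
        le_trans (opNorm_sub_le _ _) (add_le_add opNorm_one_le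
          (opNorm_mul_le' (hOb i hi) (hKb (i + 1) (by omega))))
      have t := opNorm_mul_le' t1 hX
      refine le_trans t ?_
      have h5 : 1 + CO * Ybar ≤ cind := by
        rw [hcinddef]
        nlinarith [mul_nonneg (mul_nonneg hΥ.le (inv_nonneg.mpr hγ.le)) hΥ.le]
      have hr : (0:ℝ) ≤ ΥE * ρ ^ (k - 1 - i) :=
        mul_nonneg hΥE0.le (pow_nonneg hρ0.le _)
      calc ΥE * ρ ^ (k - 1 - i) * (1 + CO * Ybar)
          = (1 + CO * Ybar) * (ΥE * ρ ^ (k - 1 - i)) := by ring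
        _ ≤ cind * (ΥE * ρ ^ (k - 1 - i)) := mul_le_mul_of_nonneg_right h5 hr
        _ = ΥE * cind * ρ ^ (k - 1 - i) := by ring
    · rw [if_neg hik, opNorm_zero]
      exact hind0
  constructor
  · have h1 := hsum nd (fun s => (Mmat D1 D2 P E i (s + 1))ᵀ) hGM
    simp only [Umat]
    calc opNorm ((∑ s ∈ range (min i k),
            prodE E (s + 1) (k - 1 - s) * Okm B W s * (Mmat D1 D2 P E i (s + 1))ᵀ)
          - (if i + 1 ≤ k then prodE E (i + 1) (k - 1 - i) * B i * (W i)⁻¹ * (D2 i)ᵀ else 0))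
        ≤ _ + _ := opNorm_sub_le _ _
      _ ≤ ΥE * CO * Cc * (1 - ρ ^ 2)⁻¹ * ρ ^ Nat.dist i k
            + ΥE * cind * ρ⁻¹ * ρ ^ Nat.dist i k := add_le_add h1 hindU
      _ ≤ (ΥE * CO * Cc * (1 - ρ ^ 2)⁻¹ + ΥE * cind * ρ⁻¹ + 1) * ρ ^ Nat.dist i k := by
          nlinarith [hrhodist0]
  · have h1 := hsum nx (fun s => (Vmat K E i (s + 1))ᵀ) hGV
    simp only [Fmat]
    calc opNorm ((∑ s ∈ range (min i k),
            prodE E (s + 1) (k - 1 - s) * Okm B W s * (Vmat K E i (s + 1))ᵀ)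
          + (if i + 1 ≤ k then prodE E (i + 1) (k - 1 - i) * (1 - Okm B W i * K (i + 1)) else 0))
        ≤ _ + _ := opNorm_add_le _ _
      _ ≤ ΥE * CO * Cc * (1 - ρ ^ 2)⁻¹ * ρ ^ Nat.dist i k
            + ΥE * cind * ρ⁻¹ * ρ ^ Nat.dist i k := add_le_add h1 hindF
      _ ≤ (ΥE * CO * Cc * (1 - ρ ^ 2)⁻¹ + ΥE * cind * ρ⁻¹ + 1) * ρ ^ Nat.dist i k := by
          nlinarith [hrhodist0]
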